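/- For all continuous y : [0,T] → V and all continuously differentiable x : [0,T] → V with x(T) = 0, the parabolic space-time bilinear form satisfies the continuity bound |ℬ(y,x)| ≤ √2 · max{1, M} · (∫₀ᵀ ‖y(t)‖_V² dt)^{1/2} · N(x), where ℬ(y,x) = ∫₀ᵀ (⟪ι y(t), −ι x′(t)⟫_H + A(t)(y(t), x(t))) dt and N(x)² = ‖ι x(0)‖_H² + ∫₀ᵀ (‖x(t)‖_V² + ‖ι x′(t)‖_*²) dt. -/

import Mathlib

open RealInnerProductSpace

/-- The dual norm `‖h‖_* := sup_{0≠v∈V} ⟪h, ι v⟫_H / ‖v‖_V` of an element `h ∈ H`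
relative to a Gelfand triple map `ι : V → H`. -/
noncomputable def gelfandDualNorm {V H : Type*}
    [NormedAddCommGroup V] [InnerProductSpace ℝ V]
    [NormedAddCommGroup H] [InnerProductSpace ℝ H]
    (ι : V →L[ℝ] H) (h : H) : ℝ :=
  ⨆ v : {v : V // v ≠ 0}, ⟪h, ι v⟫ / ‖(v : V)‖

/-- The parabolic space-time bilinear form
`ℬ(y,x) = ∫₀ᵀ (⟪ι y(t), −ι x′(t)⟫_H + A(t)(y(t), x(t))) dt`. -/
noncomputable def parabolicForm {V H : Type*}
    [NormedAddCommGroup V] [InnerProductSpace ℝ V]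
    [NormedAddCommGroup H] [InnerProductSpace ℝ H] [CompleteSpace H]
    (ι : V →L[ℝ] H) (A : ℝ → V →ₗ[ℝ] V →ₗ[ℝ] ℝ) (T : ℝ)
    (y : ℝ → V) (x x' : ℝ → V) : ℝ :=
  ∫ t in (0 : ℝ)..T, (⟪ι (y t), -ι (x' t)⟫ + A t (y t) (x t))

/-- The test norm `N(x)` with
`N(x)² = ‖ι x(0)‖_H² + ∫₀ᵀ (‖x(t)‖_V² + ‖ι x′(t)‖_*²) dt`. -/
noncomputable def parabolicTestNorm {V H : Type*}
    [NormedAddCommGroup V] [InnerProductSpace ℝ V]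
    [NormedAddCommGroup H] [InnerProductSpace ℝ H]
    (ι : V →L[ℝ] H) (T : ℝ) (x x' : ℝ → V) : ℝ :=
  Real.sqrt (‖ι (x 0)‖ ^ 2 +
    ∫ t in (0 : ℝ)..T, (‖x t‖ ^ 2 + gelfandDualNorm ι (ι (x' t)) ^ 2))

lemma gelfandDualNorm_eq_norm_adjoint {V H : Type*}
    [NormedAddCommGroup V] [InnerProductSpace ℝ V] [CompleteSpace V]
    [NormedAddCommGroup H] [InnerProductSpace ℝ H] [CompleteSpace H]
    (ι : V →L[ℝ] H) (h : H) :
    gelfandDualNorm ι h = ‖(ContinuousLinearMap.adjoint ι) h‖ := by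
  set w := (ContinuousLinearMap.adjoint ι) h with hw
  have key : ∀ v : V, ⟪h, ι v⟫ = ⟪w, v⟫ := fun v =>
    (ContinuousLinearMap.adjoint_inner_left ι v h).symm
  unfold gelfandDualNorm
  simp_rw [key]
  rcases isEmpty_or_nonempty {v : V // v ≠ 0} with hE | hNE
  · have hw0 : w = 0 := by
      by_contra h0
      exact hE.false ⟨w, h0⟩
    simp [hw0, Real.iSup_of_isEmpty]
  · have hbdd : BddAbove (Set.range fun v : {v : V // v ≠ 0} => ⟪w, (v : V)⟫ / ‖(v : V)‖) := by
      refine ⟨‖w‖, ?_⟩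
      rintro _ ⟨⟨v, hv⟩, rfl⟩
      exact (div_le_iff₀ (norm_pos_iff.mpr hv)).mpr (real_inner_le_norm w v)
    apply le_antisymm
    · exact ciSup_le fun ⟨v, hv⟩ => (div_le_iff₀ (norm_pos_iff.mpr hv)).mpr (real_inner_le_norm w v)
    · rcases eq_or_ne w 0 with h0 | h0
      · obtain ⟨v0⟩ := hNE
        have h1 := le_ciSup hbdd v0
        simp only [h0, inner_zero_left, zero_div, norm_zero] at h1 ⊢
        exact h1
      · have hval : ⟪w, w⟫ / ‖w‖ = ‖w‖ := by
          rw [real_inner_self_eq_norm_mul_norm, mul_div_assoc,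
            div_self (norm_ne_zero_iff.mpr h0), mul_one]
        calc ‖w‖ = ⟪w, w⟫ / ‖w‖ := hval.symm
          _ ≤ _ := le_ciSup hbdd ⟨w, h0⟩

/-- **Continuity of the parabolic space-time bilinear form.**
`|ℬ(y,x)| ≤ √2 · max{1, M} · (∫₀ᵀ ‖y‖_V²)^{1/2} · N(x)`. -/
theorem parabolicForm_continuity
    {V H : Type*} [NormedAddCommGroup V] [InnerProductSpace ℝ V] [CompleteSpace V]
    [NormedAddCommGroup H] [InnerProductSpace ℝ H] [CompleteSpace H]
    (ι : V →L[ℝ] H) (hι_inj : Function.Injective ι) (hι_dense : DenseRange ι)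
    (T : ℝ) (hT : 0 < T)
    (A : ℝ → V →ₗ[ℝ] V →ₗ[ℝ] ℝ)
    (hA_cont : ∀ u v : V, ContinuousOn (fun t => A t u v) (Set.Icc 0 T))
    (m M : ℝ) (hm : 0 < m) (hmM : m ≤ M)
    (hA_bdd : ∀ t ∈ Set.Icc (0 : ℝ) T, ∀ u v : V, |A t u v| ≤ M * ‖u‖ * ‖v‖)
    (hA_coer : ∀ t ∈ Set.Icc (0 : ℝ) T, ∀ v : V, m * ‖v‖ ^ 2 ≤ A t v v)
    (y : ℝ → V) (hy : Continuous y)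
    (x x' : ℝ → V) (hx : ∀ t, HasDerivAt x (x' t) t) (hx' : Continuous x')
    (hxT : x T = 0) :
    |parabolicForm ι A T y x x'| ≤
      Real.sqrt 2 * max 1 M * Real.sqrt (∫ t in (0 : ℝ)..T, ‖y t‖ ^ 2) *
        parabolicTestNorm ι T x x' := by
  have hT' : (0 : ℝ) ≤ T := hT.le
  set c := max 1 M with hc
  have hc1 : (1 : ℝ) ≤ c := le_max_left _ _
  have hcM : M ≤ c := le_max_right _ _
  have hc0 : (0 : ℝ) ≤ c := zero_le_one.trans hc1
  have hxc : Continuous x := by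
    rw [continuous_iff_continuousAt]; exact fun t => (hx t).continuousAt
  set D : ℝ → ℝ := fun t => ‖(ContinuousLinearMap.adjoint ι) (ι (x' t))‖ with hD
  have hDc : Continuous D :=
    ((ContinuousLinearMap.adjoint ι).continuous.comp (ι.continuous.comp hx')).norm
  have hD0 : ∀ t, 0 ≤ D t := fun t => norm_nonneg _
  set g : ℝ → ℝ := fun t => Real.sqrt (‖x t‖ ^ 2 + D t ^ 2) with hg
  have hgc : Continuous g := ((hxc.norm.pow 2).add (hDc.pow 2)).sqrt
  have hg0 : ∀ t, 0 ≤ g t := fun t => Real.sqrt_nonneg _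
  have hgsq : ∀ t, g t ^ 2 = ‖x t‖ ^ 2 + D t ^ 2 := fun t => Real.sq_sqrt (by positivity)
  -- the integrand
  set F : ℝ → ℝ := fun t => ⟪ι (y t), -ι (x' t)⟫ + A t (y t) (x t) with hF
  -- pointwise bound
  have hpt : ∀ t ∈ Set.Icc (0 : ℝ) T, |F t| ≤ Real.sqrt 2 * c * (‖y t‖ * g t) := by
    intro t ht
    have h1 : |⟪ι (y t), -ι (x' t)⟫| ≤ ‖y t‖ * D t := by
      have he : ⟪ι (y t), -ι (x' t)⟫ = -⟪(ContinuousLinearMap.adjoint ι) (ι (x' t)), y t⟫ := by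
        rw [inner_neg_right, ContinuousLinearMap.adjoint_inner_left, real_inner_comm]
      rw [he, abs_neg]
      calc |⟪(ContinuousLinearMap.adjoint ι) (ι (x' t)), y t⟫|
          ≤ ‖(ContinuousLinearMap.adjoint ι) (ι (x' t))‖ * ‖y t‖ := abs_real_inner_le_norm _ _
        _ = ‖y t‖ * D t := mul_comm _ _
    have h2 : |A t (y t) (x t)| ≤ M * ‖y t‖ * ‖x t‖ := hA_bdd t ht _ _
    have h3 : ‖x t‖ + D t ≤ Real.sqrt 2 * g t := by
      have hsq : (‖x t‖ + D t) ^ 2 ≤ 2 * (‖x t‖ ^ 2 + D t ^ 2) := by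
        nlinarith [sq_nonneg (‖x t‖ - D t)]
      calc ‖x t‖ + D t = Real.sqrt ((‖x t‖ + D t) ^ 2) :=
            (Real.sqrt_sq (by positivity)).symm
        _ ≤ Real.sqrt (2 * (‖x t‖ ^ 2 + D t ^ 2)) := Real.sqrt_le_sqrt hsq
        _ = Real.sqrt 2 * g t := by rw [Real.sqrt_mul (by norm_num : (0:ℝ) ≤ 2)]
    calc |F t| ≤ |⟪ι (y t), -ι (x' t)⟫| + |A t (y t) (x t)| := abs_add_le _ _
      _ ≤ ‖y t‖ * D t + M * ‖y t‖ * ‖x t‖ := add_le_add h1 h2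
      _ ≤ c * (‖y t‖ * (‖x t‖ + D t)) := by
          nlinarith [mul_nonneg (mul_nonneg (sub_nonneg.mpr hc1) (norm_nonneg (y t))) (hD0 t),
            mul_nonneg (mul_nonneg (sub_nonneg.mpr hcM) (norm_nonneg (y t))) (norm_nonneg (x t))]
      _ ≤ c * (‖y t‖ * (Real.sqrt 2 * g t)) := by
          have := mul_le_mul_of_nonneg_left h3 (norm_nonneg (y t))
          nlinarith
      _ = Real.sqrt 2 * c * (‖y t‖ * g t) := by ring
  -- continuity of the A-part
  have hAyx : ContinuousOn (fun t => A t (y t) (x t)) (Set.Icc 0 T) := by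
    intro s hs
    have h2 : ContinuousWithinAt (fun t => A t (y s) (x s)) (Set.Icc 0 T) s :=
      hA_cont (y s) (x s) s hs
    have hbc : Continuous fun t => M * (‖y t - y s‖ * ‖x t‖ + ‖y s‖ * ‖x t - x s‖) := by
      fun_prop
    have hb : Filter.Tendsto (fun t => M * (‖y t - y s‖ * ‖x t‖ + ‖y s‖ * ‖x t - x s‖))
        (nhdsWithin s (Set.Icc 0 T)) (nhds 0) := by
      have h0 := (hbc.tendsto s).mono_left (nhdsWithin_le_nhds (s := Set.Icc (0:ℝ) T))
      simpa using h0
    have h1 : Filter.Tendsto (fun t => A t (y t) (x t) - A t (y s) (x s))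
        (nhdsWithin s (Set.Icc 0 T)) (nhds 0) := by
      apply squeeze_zero_norm' ?_ hb
      filter_upwards [self_mem_nhdsWithin] with t ht
      have e : A t (y t) (x t) - A t (y s) (x s)
          = A t (y t - y s) (x t) + A t (y s) (x t - x s) := by
        simp only [map_sub, LinearMap.sub_apply]
        ring
      rw [Real.norm_eq_abs, e]
      calc |A t (y t - y s) (x t) + A t (y s) (x t - x s)|
          ≤ |A t (y t - y s) (x t)| + |A t (y s) (x t - x s)| := abs_add_le _ _
        _ ≤ M * ‖y t - y s‖ * ‖x t‖ + M * ‖y s‖ * ‖x t - x s‖ :=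
            add_le_add (hA_bdd t ht _ _) (hA_bdd t ht _ _)
        _ = M * (‖y t - y s‖ * ‖x t‖ + ‖y s‖ * ‖x t - x s‖) := by ring
    have h3 := h1.add h2
    simp only [zero_add, sub_add_cancel] at h3
    exact h3
  have hFcont : ContinuousOn F (Set.Icc 0 T) := by
    have hinner : Continuous fun t => ⟪ι (y t), -ι (x' t)⟫ :=
      (ι.continuous.comp hy).inner (ι.continuous.comp hx').neg
    exact hinner.continuousOn.add hAyx
  -- integrability
  have hFint : MeasureTheory.IntegrableOn F (Set.Ioc 0 T) :=
    (hFcont.integrableOn_compact isCompact_Icc).mono_set Set.Ioc_subset_Icc_self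
  have hBint : MeasureTheory.IntegrableOn
      (fun t => Real.sqrt 2 * c * (‖y t‖ * g t)) (Set.Ioc 0 T) :=
    ((((continuous_const.mul (hy.norm.mul hgc))).continuousOn.integrableOn_compact
      isCompact_Icc)).mono_set Set.Ioc_subset_Icc_self
  -- finite measure on the restricted interval
  haveI : MeasureTheory.IsFiniteMeasure (MeasureTheory.volume.restrict (Set.Ioc (0:ℝ) T)) := by
    constructor
    rw [MeasureTheory.Measure.restrict_apply_univ]
    exact measure_Ioc_lt_top
  have memL2 : ∀ f : ℝ → ℝ, Continuous f →
      MeasureTheory.MemLp f 2 (MeasureTheory.volume.restrict (Set.Ioc (0:ℝ) T)) := by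
    intro f hf
    obtain ⟨C, hC⟩ := (isCompact_Icc : IsCompact (Set.Icc (0:ℝ) T)).exists_bound_of_continuousOn
      hf.continuousOn
    refine MeasureTheory.MemLp.of_bound hf.aestronglyMeasurable C ?_
    refine (MeasureTheory.ae_restrict_iff' measurableSet_Ioc).mpr (MeasureTheory.ae_of_all _ ?_)
    exact fun t ht => hC t (Set.Ioc_subset_Icc_self ht)
  -- Cauchy–Schwarz
  have rpow2 : ∀ r : ℝ, r ^ (2:ℝ) = r ^ 2 := fun r => by
    rw [show (2:ℝ) = ((2:ℕ):ℝ) by norm_num, Real.rpow_natCast]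
  have CS : ∫ t in Set.Ioc (0:ℝ) T, ‖y t‖ * g t ≤
      Real.sqrt (∫ t in Set.Ioc (0:ℝ) T, ‖y t‖ ^ 2) *
      Real.sqrt (∫ t in Set.Ioc (0:ℝ) T, g t ^ 2) := by
    have hpq : Real.HolderConjugate 2 2 := Real.holderConjugate_iff.mpr ⟨one_lt_two, by norm_num⟩
    have h := MeasureTheory.integral_mul_le_Lp_mul_Lq_of_nonneg hpq
      (MeasureTheory.ae_of_all _ fun t => norm_nonneg (y t))
      (MeasureTheory.ae_of_all _ hg0)
      (by simpa using memL2 _ hy.norm) (by simpa using memL2 _ hgc)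
    simp only [rpow2] at h
    calc (∫ t in Set.Ioc (0:ℝ) T, ‖y t‖ * g t) ≤
        (∫ t in Set.Ioc (0:ℝ) T, ‖y t‖ ^ 2) ^ ((1:ℝ)/2) *
        (∫ t in Set.Ioc (0:ℝ) T, g t ^ 2) ^ ((1:ℝ)/2) := h
      _ = _ := by rw [← Real.sqrt_eq_rpow, ← Real.sqrt_eq_rpow]
  -- rewrite the test norm
  have hN : Real.sqrt (∫ t in Set.Ioc (0:ℝ) T, g t ^ 2) ≤ parabolicTestNorm ι T x x' := by
    unfold parabolicTestNorm
    rw [intervalIntegral.integral_of_le hT']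
    have he : ∀ t, ‖x t‖ ^ 2 + gelfandDualNorm ι (ι (x' t)) ^ 2 = g t ^ 2 := by
      intro t
      rw [gelfandDualNorm_eq_norm_adjoint, hgsq]
    simp only [he]
    exact Real.sqrt_le_sqrt (le_add_of_nonneg_left (by positivity))
  -- assemble
  unfold parabolicForm
  rw [intervalIntegral.integral_of_le hT']
  rw [show Real.sqrt (∫ t in (0:ℝ)..T, ‖y t‖ ^ 2)
      = Real.sqrt (∫ t in Set.Ioc (0:ℝ) T, ‖y t‖ ^ 2) by
    rw [intervalIntegral.integral_of_le hT']]
  calc |∫ t in Set.Ioc (0:ℝ) T, F t|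
      ≤ ∫ t in Set.Ioc (0:ℝ) T, |F t| := by
        simpa [Real.norm_eq_abs] using
          MeasureTheory.norm_integral_le_integral_norm
            (μ := MeasureTheory.volume.restrict (Set.Ioc (0:ℝ) T)) F
    _ ≤ ∫ t in Set.Ioc (0:ℝ) T, Real.sqrt 2 * c * (‖y t‖ * g t) := by
        refine MeasureTheory.setIntegral_mono_on hFint.abs hBint measurableSet_Ioc ?_
        exact fun t ht => hpt t (Set.Ioc_subset_Icc_self ht)
    _ = Real.sqrt 2 * c * ∫ t in Set.Ioc (0:ℝ) T, ‖y t‖ * g t := by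
        rw [MeasureTheory.integral_const_mul]
    _ ≤ Real.sqrt 2 * c * (Real.sqrt (∫ t in Set.Ioc (0:ℝ) T, ‖y t‖ ^ 2) *
          Real.sqrt (∫ t in Set.Ioc (0:ℝ) T, g t ^ 2)) := by
        have h2 : (0:ℝ) ≤ Real.sqrt 2 * c := by positivity
        exact mul_le_mul_of_nonneg_left CS h2
    _ ≤ Real.sqrt 2 * c * Real.sqrt (∫ t in Set.Ioc (0:ℝ) T, ‖y t‖ ^ 2) *
          parabolicTestNorm ι T x x' := by
        rw [mul_assoc (Real.sqrt 2 * c)]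
        refine mul_le_mul_of_nonneg_left ?_ (by positivity)
        exact mul_le_mul_of_nonneg_left hN (Real.sqrt_nonneg _)
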